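/- Let n be a natural number and for g = (g₁, …, gₙ) ∈ SU(2)ⁿ let φ_g : FreeGroup(Fin n) → SU(2) denote the unique group homomorphism sending the i-th generator to g_i. If g, h ∈ SU(2)ⁿ satisfy Tr(φ_g(w)) = Tr(φ_h(w)) for every word w ∈ FreeGroup(Fin n), then there exists u ∈ SU(2) such that h_i = u⁻¹ · g_i · u for all i. -/

import Mathlib

/-- `SU2` is the special unitary group SU(2): the group of 2×2 complex unitary
matrices with determinant 1, realized as a subgroup of the unitary group. -/
def SU2 : Subgroup (Matrix.unitaryGroup (Fin 2) ℂ) where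
  carrier := {A | (A : Matrix (Fin 2) (Fin 2) ℂ).det = 1}
  one_mem' := by simp
  mul_mem' := by
    intro a b ha hb
    simp only [Set.mem_setOf_eq] at *
    show ((a : Matrix (Fin 2) (Fin 2) ℂ) * (b : Matrix (Fin 2) (Fin 2) ℂ)).det = 1
    rw [Matrix.det_mul, ha, hb, one_mul]
  inv_mem' := by
    intro a ha
    simp only [Set.mem_setOf_eq] at *
    show ((a⁻¹ : Matrix.unitaryGroup (Fin 2) ℂ) : Matrix (Fin 2) (Fin 2) ℂ).det = 1
    rw [Matrix.UnitaryGroup.inv_val, Matrix.star_eq_conjTranspose, Matrix.det_conjTranspose, ha,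
      star_one]

/-- The underlying 2×2 complex matrix of an element of SU(2). -/
def SU2.toMatrix (g : SU2) : Matrix (Fin 2) (Fin 2) ℂ := g.val.val

/-- The trace of (the matrix of) an element of SU(2). -/
noncomputable def SU2.trace (g : SU2) : ℂ := Matrix.trace (SU2.toMatrix g)

namespace SU2aux
open scoped Matrix
open Matrix

abbrev M2 := Matrix (Fin 2) (Fin 2) ℂ

/-- normal form of an SU(2) matrix -/
def mk2 (a b : ℂ) : M2 := !![a, b; -star b, star a]

lemma mk2_mul (a b c d : ℂ) :
    mk2 a b * mk2 c d = mk2 (a*c - b*star d) (a*d + b*star c) := by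
  simp only [mk2, Matrix.mul_fin_two, star_add, star_sub, star_mul', star_star]
  congr 1 <;> ring

lemma mk2_one : mk2 1 0 = 1 := by
  simp [mk2, Matrix.one_fin_two]

lemma mk2_inj {a b c d : ℂ} (h : mk2 a b = mk2 c d) : a = c ∧ b = d := by
  constructor
  · have := congrFun (congrFun h 0) 0; simpa [mk2] using this
  · have := congrFun (congrFun h 0) 1; simpa [mk2] using this

lemma mk2_ext {a b c d : ℂ} (h1 : a = c) (h2 : b = d) : mk2 a b = mk2 c d := by
  rw [h1, h2]

lemma mk2_trace (a b : ℂ) : Matrix.trace (mk2 a b) = a + star a := by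
  simp [mk2, Matrix.trace_fin_two]

lemma mk2_conjTranspose (a b : ℂ) : (mk2 a b)ᴴ = mk2 (star a) (-b) := by
  simp only [mk2]
  ext i j
  fin_cases i <;> fin_cases j <;> simp [Matrix.conjTranspose_apply]

lemma mk2_det (a b : ℂ) : (mk2 a b).det = a * star a + b * star b := by
  simp [mk2, Matrix.det_fin_two]
  try ring

lemma mk2_eq_one {x y : ℂ} (hx : x = 1) (hy : y = 0) : mk2 x y = 1 := by
  rw [hx, hy, mk2_one]

lemma mk2_mem_unitary {a b : ℂ} (h : a * star a + b * star b = 1) :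
    mk2 a b ∈ Matrix.unitaryGroup (Fin 2) ℂ := by
  constructor
  · show (mk2 a b)ᴴ * mk2 a b = 1
    rw [mk2_conjTranspose, mk2_mul]
    exact mk2_eq_one
      (by (try simp only [star_star, star_neg]); linear_combination h)
      (by (try simp only [star_star, star_neg]); ring)
  · show mk2 a b * (mk2 a b)ᴴ = 1
    rw [mk2_conjTranspose, mk2_mul]
    exact mk2_eq_one
      (by (try simp only [star_star, star_neg]); linear_combination h)
      (by (try simp only [star_star, star_neg]); ring)

/-- construct an SU2 element from a normal-form pair -/
def ofPair (a b : ℂ) (h : a * star a + b * star b = 1) : SU2 :=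
  ⟨⟨mk2 a b, mk2_mem_unitary h⟩, by
    show (mk2 a b).det = 1
    rw [mk2_det]; exact h⟩

@[simp] lemma toMatrix_ofPair (a b : ℂ) (h) : SU2.toMatrix (ofPair a b h) = mk2 a b := rfl

lemma toMatrix_injective : Function.Injective SU2.toMatrix := by
  intro x y h
  exact Subtype.ext (Subtype.ext h)

@[simp] lemma toMatrix_mul (x y : SU2) :
    SU2.toMatrix (x * y) = SU2.toMatrix x * SU2.toMatrix y := rfl

@[simp] lemma toMatrix_one : SU2.toMatrix 1 = 1 := rfl

lemma toMatrix_inv (x : SU2) : SU2.toMatrix x⁻¹ = (SU2.toMatrix x)ᴴ := by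
  show ((x⁻¹ : SU2) : Matrix.unitaryGroup (Fin 2) ℂ).val = _
  rw [show ((x⁻¹ : SU2) : Matrix.unitaryGroup (Fin 2) ℂ) = (x : Matrix.unitaryGroup (Fin 2) ℂ)⁻¹ from rfl]
  rw [Matrix.UnitaryGroup.inv_val, Matrix.star_eq_conjTranspose]
  rfl

/-- every SU2 element has normal form -/
lemma exists_pair (g : SU2) :
    ∃ a b : ℂ, SU2.toMatrix g = mk2 a b ∧ a * star a + b * star b = 1 := by
  set A := SU2.toMatrix g with hA
  have hdet : A.det = 1 := g.prop
  have hu : A ∈ Matrix.unitaryGroup (Fin 2) ℂ := g.val.prop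
  have hAAH : A * Aᴴ = 1 := by
    have := hu.2
    simpa [Matrix.star_eq_conjTranspose, SU2.toMatrix] using this
  have hadj : A.adjugate = Aᴴ := by
    have h1 : A * A.adjugate = 1 := by rw [Matrix.mul_adjugate, hdet, one_smul]
    have hd : Invertible A.det := by rw [hdet]; exact invertibleOne
    have h2 : Invertible A := A.invertibleOfDetInvertible
    calc A.adjugate = ⅟A * (A * A.adjugate) := by rw [← mul_assoc, invOf_mul_self, one_mul]
    _ = ⅟A * (A * Aᴴ) := by rw [h1, hAAH]
    _ = Aᴴ := by rw [← mul_assoc, invOf_mul_self, one_mul]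
  refine ⟨A 0 0, A 0 1, ?_, ?_⟩
  · have hadj2 := Matrix.adjugate_fin_two A
    have e1 : A 1 1 = star (A 0 0) := by
      have := congrFun (congrFun (hadj.symm.trans hadj2) 0) 0
      simpa [Matrix.conjTranspose_apply] using this.symm
    have e2 : A 1 0 = -star (A 0 1) := by
      have := congrFun (congrFun (hadj.symm.trans hadj2) 0) 1
      simp only [Matrix.conjTranspose_apply, Matrix.cons_val', Matrix.cons_val_zero,
        Matrix.cons_val_one, Matrix.head_cons, Matrix.head_fin_const, Matrix.empty_val',
        Matrix.cons_val_fin_one] at this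
      norm_num at this
      have this2 : star (A 1 0) = -A 0 1 := this
      rw [← star_star (A 1 0), this2, star_neg]
    rw [Matrix.eta_fin_two A, e1, e2]; rfl
  · have := congrFun (congrFun hAAH 0) 0
    simpa [Matrix.mul_apply, Fin.sum_univ_two, Matrix.one_apply] using this

lemma entry_eq_zero_of_trace (M : M2) (h : Matrix.trace (Mᴴ * M) = 0) : M = 0 := by
  have etr : Matrix.trace (Mᴴ * M)
      = ((Complex.normSq (M 0 0) + Complex.normSq (M 1 0)
        + Complex.normSq (M 0 1) + Complex.normSq (M 1 1) : ℝ) : ℂ) := by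
    have key : ∀ z : ℂ, star z * z = (Complex.normSq z : ℂ) := fun z => by
      rw [Complex.star_def, Complex.normSq_eq_conj_mul_self]
    simp only [Matrix.trace_fin_two, Matrix.mul_apply, Fin.sum_univ_two,
      Matrix.conjTranspose_apply, key]
    push_cast
    ring
  rw [etr] at h
  have hre : Complex.normSq (M 0 0) + Complex.normSq (M 1 0)
      + Complex.normSq (M 0 1) + Complex.normSq (M 1 1) = 0 := by
    exact_mod_cast h
  have h00 := Complex.normSq_nonneg (M 0 0)
  have h10 := Complex.normSq_nonneg (M 1 0)
  have h01 := Complex.normSq_nonneg (M 0 1)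
  have h11 := Complex.normSq_nonneg (M 1 1)
  have e00 : M 0 0 = 0 := by
    rw [← Complex.normSq_eq_zero]; linarith
  have e10 : M 1 0 = 0 := by
    rw [← Complex.normSq_eq_zero]; linarith
  have e01 : M 0 1 = 0 := by
    rw [← Complex.normSq_eq_zero]; linarith
  have e11 : M 1 1 = 0 := by
    rw [← Complex.normSq_eq_zero]; linarith
  rw [Matrix.eta_fin_two M, e00, e01, e10, e11]
  ext i j; fin_cases i <;> fin_cases j <;> simp

lemma toMatrix_word_conjTranspose_mul {n : ℕ} (f : Fin n → SU2) (v w : FreeGroup (Fin n)) :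
    (SU2.toMatrix (FreeGroup.lift f v))ᴴ * SU2.toMatrix (FreeGroup.lift f w)
      = SU2.toMatrix (FreeGroup.lift f (v⁻¹ * w)) := by
  rw [← toMatrix_inv, ← toMatrix_mul, ← _root_.map_inv, ← _root_.map_mul]

lemma trace_form {n m : ℕ} (f : Fin n → SU2) (w : Fin m → FreeGroup (Fin n)) (c : Fin m → ℂ) :
    Matrix.trace ((∑ k, c k • SU2.toMatrix (FreeGroup.lift f (w k)))ᴴ
      * (∑ k, c k • SU2.toMatrix (FreeGroup.lift f (w k))))
    = ∑ j, ∑ k, star (c j) * c k * SU2.trace (FreeGroup.lift f ((w j)⁻¹ * w k)) := by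
  rw [Matrix.conjTranspose_sum, Finset.sum_mul_sum, Matrix.trace_sum]
  refine Finset.sum_congr rfl fun j _ => ?_
  rw [Matrix.trace_sum]
  refine Finset.sum_congr rfl fun k _ => ?_
  rw [Matrix.conjTranspose_smul, smul_mul_assoc, mul_smul_comm, Matrix.trace_smul,
    Matrix.trace_smul, toMatrix_word_conjTranspose_mul]
  rw [smul_eq_mul, smul_eq_mul, ← mul_assoc]
  rfl

lemma transfer {n : ℕ} {g h : Fin n → SU2}
    (htr : ∀ w : FreeGroup (Fin n),
      SU2.trace (FreeGroup.lift g w) = SU2.trace (FreeGroup.lift h w))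
    {m : ℕ} (w : Fin m → FreeGroup (Fin n)) (c : Fin m → ℂ)
    (h0 : ∑ k, c k • SU2.toMatrix (FreeGroup.lift g (w k)) = 0) :
    ∑ k, c k • SU2.toMatrix (FreeGroup.lift h (w k)) = 0 := by
  apply entry_eq_zero_of_trace
  rw [trace_form h w c]
  have : ∑ j, ∑ k, star (c j) * c k * SU2.trace (FreeGroup.lift h ((w j)⁻¹ * w k))
      = ∑ j, ∑ k, star (c j) * c k * SU2.trace (FreeGroup.lift g ((w j)⁻¹ * w k)) := by
    refine Finset.sum_congr rfl fun j _ => Finset.sum_congr rfl fun k _ => ?_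
    rw [htr]
  rw [this, ← trace_form g w c, h0]
  simp

noncomputable def lamRe (t : ℝ) : ℝ := max (-1) (min 1 (t/2))

lemma lamRe_mem (t : ℝ) : -1 ≤ lamRe t ∧ lamRe t ≤ 1 :=
  ⟨le_max_left _ _, max_le (by norm_num) (min_le_left _ _)⟩

noncomputable def lamIm (t : ℝ) : ℝ := Real.sqrt (1 - lamRe t ^ 2)

lemma lamIm_nonneg (t : ℝ) : 0 ≤ lamIm t := Real.sqrt_nonneg _

lemma lamIm_sq (t : ℝ) : lamIm t ^ 2 = 1 - lamRe t ^ 2 := by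
  have h := lamRe_mem t
  exact Real.sq_sqrt (by nlinarith [h.1, h.2])

noncomputable def lam (t : ℝ) : ℂ := (lamRe t : ℂ) + (lamIm t : ℂ) * Complex.I

lemma lam_re (t : ℝ) : (lam t).re = lamRe t := by simp [lam]

lemma lam_im (t : ℝ) : (lam t).im = lamIm t := by simp [lam]

lemma lam_unit (t : ℝ) : lam t * star (lam t) = 1 := by
  rw [Complex.star_def, Complex.mul_conj, lam, Complex.normSq_add_mul_I]
  norm_cast
  rw [lamIm_sq]; ring

lemma lamRe_eq (t : ℝ) (h : |t| ≤ 2) : lamRe t = t / 2 := by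
  rw [abs_le] at h
  rw [lamRe, min_eq_right (by linarith), max_eq_right (by linarith)]

lemma lam_add_star (t : ℝ) (h : |t| ≤ 2) : lam t + star (lam t) = (t : ℂ) := by
  rw [Complex.star_def, Complex.add_conj, lam]
  simp only [Complex.add_re, Complex.ofReal_re, Complex.mul_re, Complex.ofReal_im,
    Complex.I_re, Complex.I_im]
  rw [lamRe_eq t h]
  push_cast
  ring

noncomputable def diagSU (t : ℝ) : SU2 :=
  ofPair (lam t) 0 (by simpa using lam_unit t)

lemma toMatrix_diagSU (t : ℝ) : SU2.toMatrix (diagSU t) = mk2 (lam t) 0 := rfl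

lemma star_mul_self_eq_normSq (z : ℂ) : z * star z = (Complex.normSq z : ℂ) := by
  rw [Complex.star_def, Complex.mul_conj]

lemma pair_normSq {a b : ℂ} (h : a * star a + b * star b = 1) :
    Complex.normSq a + Complex.normSq b = 1 := by
  have : ((Complex.normSq a + Complex.normSq b : ℝ) : ℂ) = 1 := by
    push_cast
    rw [← star_mul_self_eq_normSq, ← star_mul_self_eq_normSq]
    exact h
  exact_mod_cast this

lemma trace_eq_pair (g : SU2) {a b : ℂ} (hg : SU2.toMatrix g = mk2 a b) :
    SU2.trace g = a + star a := by rw [SU2.trace, hg, mk2_trace]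

lemma trace_re_pair (g : SU2) {a b : ℂ} (hg : SU2.toMatrix g = mk2 a b) :
    (SU2.trace g).re = 2 * a.re ∧ SU2.trace g = ((SU2.trace g).re : ℂ) := by
  have h := trace_eq_pair g hg
  constructor
  · rw [h, Complex.star_def, Complex.add_conj]; simp
  · rw [h, Complex.star_def, Complex.add_conj]; simp

lemma trace_re_abs_le (g : SU2) : |(SU2.trace g).re| ≤ 2 := by
  obtain ⟨a, b, hg, hud⟩ := exists_pair g
  have h1 := pair_normSq hud
  have h2 := (trace_re_pair g hg).1
  rw [h2]
  have := Complex.normSq_nonneg b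
  have ha : a.re ^ 2 ≤ 1 := by
    have : Complex.normSq a = a.re^2 + a.im^2 := by rw [Complex.normSq_apply]; ring
    nlinarith [sq_nonneg a.im]
  rw [abs_le]; constructor <;> nlinarith [sq_nonneg (a.re - 1), sq_nonneg (a.re + 1)]

/-- conjugation: group level to matrix level -/
lemma toMatrix_conj (u g : SU2) :
    SU2.toMatrix (u⁻¹ * g * u) = (SU2.toMatrix u)ᴴ * SU2.toMatrix g * SU2.toMatrix u := by
  rw [toMatrix_mul, toMatrix_mul, toMatrix_inv]

/-- every element of SU2 is conjugate to the standard diagonal matrix with its trace -/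
lemma exists_diag (g : SU2) : ∃ u : SU2, u⁻¹ * g * u = diagSU ((SU2.trace g).re) := by
  obtain ⟨a, b, hg, hud⟩ := exists_pair g
  set t : ℝ := (SU2.trace g).re with ht
  have habs : |t| ≤ 2 := trace_re_abs_le g
  have htre := (trace_re_pair g hg).1
  have hsum : lam t + star (lam t) = a + star a := by
    rw [lam_add_star t habs, (trace_eq_pair g hg).symm, (trace_re_pair g hg).2.symm]
  have hlu := lam_unit t
  by_cases hb : b = 0
  · -- g is diagonal
    subst hb
    have hnsa : Complex.normSq a = 1 := by
      have := pair_normSq hud; simpa using this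
    have hre : a.re = lamRe t := by
      rw [lamRe_eq t habs, ht, htre]; ring
    have him2 : a.im ^ 2 = lamIm t ^ 2 := by
      rw [lamIm_sq, ← hre]
      have : Complex.normSq a = a.re^2 + a.im^2 := by rw [Complex.normSq_apply]; ring
      nlinarith
    rcases le_or_gt 0 a.im with him | him
    · -- a = lam t
      have ha : a = lam t := by
        apply Complex.ext
        · rw [lam_re, hre]
        · rw [lam_im]
          nlinarith [lamIm_nonneg t]
      refine ⟨1, toMatrix_injective ?_⟩
      rw [toMatrix_conj, toMatrix_diagSU, toMatrix_one, Matrix.conjTranspose_one,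
        one_mul, mul_one, hg, ha]
    · -- star a = lam t
      have ha : star a = lam t := by
        apply Complex.ext
        · rw [lam_re, ← hre]; simp [Complex.star_def]
        · rw [lam_im]
          simp only [Complex.star_def, Complex.conj_im]
          nlinarith [lamIm_nonneg t]
      refine ⟨ofPair 0 1 (by simp), toMatrix_injective ?_⟩
      rw [toMatrix_conj, toMatrix_diagSU, toMatrix_ofPair, hg]
      rw [show (mk2 0 1)ᴴ = mk2 0 (-1) by rw [mk2_conjTranspose]; norm_num]
      rw [mk2_mul, mk2_mul]
      rw [← ha]
      congr 1 <;> simp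
  · -- b ≠ 0 : genuine eigenvector computation
    set L := star (lam t) with hL
    set A := star a with hA
    set B := star b with hB
    have hr2' : 0 < Complex.normSq b + Complex.normSq (lam t - a) :=
      lt_of_lt_of_le (by simpa [Complex.normSq_pos] using hb)
        (le_add_of_nonneg_right (Complex.normSq_nonneg _))
    set r : ℝ := Real.sqrt (Complex.normSq b + Complex.normSq (lam t - a)) with hr
    have hrpos : 0 < r := Real.sqrt_pos.mpr hr2'
    have hrne : (r : ℂ) ≠ 0 := by exact_mod_cast ne_of_gt hrpos
    have hr2 : (r : ℂ) ^ 2 = b * B + (lam t - a) * (L - A) := by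
      have : (r : ℝ) ^ 2 = Complex.normSq b + Complex.normSq (lam t - a) :=
        Real.sq_sqrt (le_of_lt hr2')
      have hcast : ((r : ℝ)^2 : ℝ) = ((Complex.normSq b + Complex.normSq (lam t - a) : ℝ)) := this
      calc (r : ℂ)^2 = (((r:ℝ)^2 : ℝ) : ℂ) := by push_cast; ring
        _ = ((Complex.normSq b + Complex.normSq (lam t - a) : ℝ) : ℂ) := by rw [hcast]
        _ = b * B + (lam t - a) * (L - A) := by
            push_cast
            rw [← star_mul_self_eq_normSq, ← star_mul_self_eq_normSq]
            simp only [star_sub, hL, hA, hB]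
      
    set c : ℂ := b / r with hc
    set d : ℂ := -(L - A) / r with hd
    have hstarr : star (r : ℂ) = (r : ℂ) := by
      rw [Complex.star_def, Complex.conj_ofReal]
    have hsc : star c = B / r := by rw [hc, star_div₀, hstarr, hB]
    have hsd : star d = -(lam t - a) / r := by
      rw [hd, star_div₀, hstarr, star_neg, star_sub, hL, hA, star_star, star_star]
    have hcd : c * star c + d * star d = 1 := by
      rw [hc, hsc, hd, hsd]
      field_simp
      linear_combination hr2.symm
    refine ⟨ofPair c d hcd, toMatrix_injective ?_⟩
    rw [toMatrix_conj, toMatrix_diagSU, toMatrix_ofPair, hg]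
    rw [show (mk2 c d)ᴴ = mk2 (star c) (-d) from mk2_conjTranspose c d]
    rw [mk2_mul, mk2_mul]
    have e2 : (star c * a - -d * star b) * d + (star c * b + -d * star a) * star c = 0 := by
      rw [hsc, hd, ← hA, ← hB]
      linear_combination (B/(r:ℂ)^2) * hud + (B*L/(r:ℂ)^2) * hsum - (B/(r:ℂ)^2) * hlu
    have e1 : (star c * a - -d * star b) * c - (star c * b + -d * star a) * star d = lam t := by
      rw [hsc, hsd, hc, hd, ← hA, ← hB]
      linear_combination (-(L-A)/(r:ℂ)^2) * hud - ((L-A)*(lam t)/(r:ℂ)^2) * hsum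
        + ((L-A)/(r:ℂ)^2) * hlu - (lam t/(r:ℂ)^2) * hr2
        + lam t * (mul_inv_cancel₀ (pow_ne_zero 2 hrne))
    rw [e1, e2]

lemma conj_of_trace_eq (x y : SU2) (h : SU2.trace x = SU2.trace y) :
    ∃ u : SU2, y = u⁻¹ * x * u := by
  obtain ⟨u1, h1⟩ := exists_diag x
  obtain ⟨u2, h2⟩ := exists_diag y
  rw [← h] at h2
  refine ⟨u1 * u2⁻¹, ?_⟩
  have key : u1⁻¹ * x * u1 = u2⁻¹ * y * u2 := by rw [h1, h2]
  have : u2 * (u1⁻¹ * x * u1) * u2⁻¹ = y := by rw [key]; group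
  rw [← this]; group

def negOne : SU2 := ofPair (-1) 0 (by norm_num)

lemma toMatrix_negOne : SU2.toMatrix negOne = -1 := by
  show mk2 (-1) 0 = -1
  rw [mk2, Matrix.one_fin_two]
  norm_num

lemma lam_two : lam 2 = 1 := by
  have h1 : lamRe 2 = 1 := by norm_num [lamRe]
  have h2 : lamIm 2 = 0 := by rw [lamIm, h1]; norm_num
  rw [lam, h1, h2]; norm_num

lemma lam_neg_two : lam (-2) = -1 := by
  have h1 : lamRe (-2) = -1 := by norm_num [lamRe]
  have h2 : lamIm (-2) = 0 := by rw [lamIm, h1]; norm_num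
  rw [lam, h1, h2]; norm_num

lemma eq_one_of_trace_two (x : SU2) (h : SU2.trace x = 2) : x = 1 := by
  obtain ⟨u, hu⟩ := exists_diag x
  have ht : (SU2.trace x).re = 2 := by rw [h]; norm_num
  rw [ht] at hu
  have hd : diagSU 2 = 1 := by
    apply toMatrix_injective
    rw [toMatrix_diagSU, lam_two, toMatrix_one, mk2_one]
  rw [hd] at hu
  calc x = u * (u⁻¹ * x * u) * u⁻¹ := by group
    _ = 1 := by rw [hu]; group

lemma eq_negOne_of_trace_neg_two (x : SU2) (h : SU2.trace x = -2) : x = negOne := by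
  obtain ⟨u, hu⟩ := exists_diag x
  have ht : (SU2.trace x).re = -2 := by rw [h]; norm_num
  rw [ht] at hu
  have hd : diagSU (-2) = negOne := by
    apply toMatrix_injective
    rw [toMatrix_diagSU, lam_neg_two]; rfl
  rw [hd] at hu
  have hcentral : u * negOne * u⁻¹ = negOne := by
    apply toMatrix_injective
    rw [toMatrix_mul, toMatrix_mul, toMatrix_inv, toMatrix_negOne]
    have huu : SU2.toMatrix u * (SU2.toMatrix u)ᴴ = 1 := by
      have := u.val.prop.2
      simpa [Matrix.star_eq_conjTranspose, SU2.toMatrix] using this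
    calc SU2.toMatrix u * (-1) * (SU2.toMatrix u)ᴴ
        = -(SU2.toMatrix u * (SU2.toMatrix u)ᴴ) := by noncomm_ring
      _ = -1 := by rw [huu]
  calc x = u * (u⁻¹ * x * u) * u⁻¹ := by group
    _ = u * negOne * u⁻¹ := by rw [hu]
    _ = negOne := hcentral

lemma trace_real (x : SU2) : SU2.trace x = ((SU2.trace x).re : ℂ) := by
  obtain ⟨a, b, hg, _⟩ := exists_pair x
  exact (trace_re_pair x hg).2

lemma lam_ne_star {x : SU2} (h2 : SU2.trace x ≠ 2) (h2' : SU2.trace x ≠ -2) :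
    lam ((SU2.trace x).re) ≠ star (lam ((SU2.trace x).re)) := by
  set t := (SU2.trace x).re with ht
  intro heq
  have him : lamIm t = 0 := by
    have h1 := congrArg Complex.im heq
    simp only [Complex.star_def, Complex.conj_im, lam_im] at h1
    linarith
  have habs : |t| ≤ 2 := trace_re_abs_le x
  have hsq := lamIm_sq t
  rw [him] at hsq
  have hfac : (lamRe t - 1) * (lamRe t + 1) = 0 := by nlinarith
  have hre : lamRe t = t/2 := lamRe_eq t habs
  rcases mul_eq_zero.mp hfac with h1 | h1
  · apply h2
    rw [trace_real x, ← ht]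
    have haa : t = 2 := by rw [hre] at h1; linarith
    rw [haa]; norm_num
  · apply h2'
    rw [trace_real x, ← ht]
    have haa : t = -2 := by rw [hre] at h1; linarith
    rw [haa]; norm_num

lemma toMatrix_x_eq (x u : SU2) {t : ℝ} (hu : u⁻¹ * x * u = diagSU t) :
    SU2.toMatrix x = SU2.toMatrix u * mk2 (lam t) 0 * (SU2.toMatrix u)ᴴ := by
  have hx : x = u * diagSU t * u⁻¹ := by rw [← hu]; group
  conv_lhs => rw [hx]
  rw [toMatrix_mul, toMatrix_mul, toMatrix_inv, toMatrix_diagSU]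

lemma mem_commutant {x z : SU2} (h2 : SU2.trace x ≠ 2) (h2' : SU2.trace x ≠ -2)
    (hcomm : z * x = x * z) :
    ∃ p q : ℂ, SU2.toMatrix z = p • (1 : M2) + q • SU2.toMatrix x := by
  obtain ⟨u, hu⟩ := exists_diag x
  set t := (SU2.trace x).re with ht
  set lm := lam t with hlm
  have hne : lm - star lm ≠ 0 := sub_ne_zero_of_ne (lam_ne_star h2 h2')
  set Z := u⁻¹ * z * u with hZ
  obtain ⟨x', y', hz', hz'u⟩ := exists_pair Z
  have hcomm' : Z * diagSU t = diagSU t * Z := by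
    rw [hZ, ← hu]
    calc u⁻¹ * z * u * (u⁻¹ * x * u) = u⁻¹ * (z * x) * u := by group
      _ = u⁻¹ * (x * z) * u := by rw [hcomm]
      _ = u⁻¹ * x * u * (u⁻¹ * z * u) := by group
  have hmat : mk2 x' y' * mk2 lm 0 = mk2 lm 0 * mk2 x' y' := by
    have h1 := congrArg SU2.toMatrix hcomm'
    rw [toMatrix_mul Z (diagSU t), toMatrix_mul (diagSU t) Z, toMatrix_diagSU, hz', ← hlm] at h1
    exact h1
  rw [mk2_mul, mk2_mul] at hmat
  have hsecond := (mk2_inj hmat).2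
  have hy'0 : y' = 0 := by
    have hstep : y' * (star lm - lm) = 0 := by linear_combination hsecond
    rcases mul_eq_zero.mp hstep with hcase | hcase
    · exact hcase
    · exact absurd (by linear_combination -hcase) hne
  set q : ℂ := (x' - star x') / (lm - star lm) with hq
  set p : ℂ := x' - q * lm with hp
  refine ⟨p, q, ?_⟩
  have hzeq : z = u * Z * u⁻¹ := by rw [hZ]; group
  have hentry : star x' = p + q * star lm := by
    have hqq : q * (lm - star lm) = x' - star x' := by rw [hq, div_mul_cancel₀ _ hne]
    rw [hp]; linear_combination hqq
  have hz'diag : SU2.toMatrix Z = p • (1 : M2) + q • mk2 lm 0 := by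
    rw [hz', hy'0]
    have e00 : x' = p + q * lm := by rw [hp]; ring
    ext i j
    fin_cases i <;> fin_cases j <;>
      simp only [mk2, Matrix.add_apply, Matrix.smul_apply, Matrix.one_apply, Matrix.cons_val',
        Matrix.cons_val_zero, Matrix.cons_val_one, Matrix.head_cons, Matrix.head_fin_const,
        Matrix.empty_val', Matrix.cons_val_fin_one, smul_eq_mul, star_zero, neg_zero, mul_zero,
        mul_one, add_zero, zero_add, Fin.isValue, ne_eq, zero_ne_one, not_false_eq_true,
        one_ne_zero, if_true, if_false] <;>
      first
        | rfl
        | exact e00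
        | exact hentry
        | simp
  have hx := toMatrix_x_eq x u hu
  rw [← hlm] at hx
  have huu : SU2.toMatrix u * (SU2.toMatrix u)ᴴ = 1 := by
    have := u.val.prop.2
    simpa [Matrix.star_eq_conjTranspose, SU2.toMatrix] using this
  rw [hzeq, toMatrix_mul (u * Z) u⁻¹, toMatrix_mul u Z, toMatrix_inv, hz'diag, hx]
  simp only [Matrix.mul_add, Matrix.add_mul, Matrix.mul_smul, Matrix.smul_mul, one_mul,
    mul_one, Matrix.mul_assoc, huu]

lemma toMatrix_mul_conjT (u : SU2) : SU2.toMatrix u * (SU2.toMatrix u)ᴴ = 1 := by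
  have := u.val.prop.2
  simpa [Matrix.star_eq_conjTranspose, SU2.toMatrix] using this

lemma conjT_mul_toMatrix (u : SU2) : (SU2.toMatrix u)ᴴ * SU2.toMatrix u = 1 := by
  have := u.val.prop.1
  simpa [Matrix.star_eq_conjTranspose, SU2.toMatrix] using this

lemma trace_conj (u z : SU2) : SU2.trace (u⁻¹ * z * u) = SU2.trace z := by
  rw [SU2.trace, SU2.trace, toMatrix_conj]
  rw [Matrix.trace_mul_cycle, toMatrix_mul_conjT, Matrix.one_mul]

lemma negOne_central (z : SU2) : negOne * z = z * negOne := by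
  apply toMatrix_injective
  rw [toMatrix_mul, toMatrix_mul, toMatrix_negOne]
  simp

lemma nonscalar_of_noncomm {x y : SU2} (hnc : x * y ≠ y * x) :
    SU2.trace x ≠ 2 ∧ SU2.trace x ≠ -2 := by
  constructor
  · intro h
    exact hnc (by rw [eq_one_of_trace_two x h, one_mul, mul_one])
  · intro h
    exact hnc (by rw [eq_negOne_of_trace_neg_two x h, negOne_central])

lemma diag_mk2_comm (a c : ℂ) : mk2 a 0 * mk2 c 0 = mk2 c 0 * mk2 a 0 := by
  rw [mk2_mul, mk2_mul]
  congr 1 <;> ring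

/-- if `x` is conjugated to diagonal and `y` doesn't commute with `x`,
the conjugate of `y` has a nonzero off-diagonal entry. -/
lemma offdiag_ne_zero {x y u : SU2} {t : ℝ} {a b : ℂ}
    (hu : u⁻¹ * x * u = diagSU t)
    (hB : SU2.toMatrix (u⁻¹ * y * u) = mk2 a b)
    (hnc : x * y ≠ y * x) : b ≠ 0 := by
  intro hb0
  apply hnc
  have hcomm : (u⁻¹ * x * u) * (u⁻¹ * y * u) = (u⁻¹ * y * u) * (u⁻¹ * x * u) := by
    apply toMatrix_injective
    rw [hu, toMatrix_mul (diagSU t) (u⁻¹ * y * u), toMatrix_mul (u⁻¹ * y * u) (diagSU t), hB,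
      toMatrix_diagSU, hb0, diag_mk2_comm]
  have := congrArg (fun w => u * w * u⁻¹) hcomm
  calc x * y = u * ((u⁻¹ * x * u) * (u⁻¹ * y * u)) * u⁻¹ := by group
    _ = u * ((u⁻¹ * y * u) * (u⁻¹ * x * u)) * u⁻¹ := by rw [hcomm]
    _ = y * x := by group

lemma pair_conj {x1 y1 x2 y2 : SU2} (hnc1 : x1 * y1 ≠ y1 * x1) (hnc2 : x2 * y2 ≠ y2 * x2)
    (hx : SU2.trace x1 = SU2.trace x2) (hy : SU2.trace y1 = SU2.trace y2)
    (hxy : SU2.trace (x1 * y1) = SU2.trace (x2 * y2)) :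
    ∃ u : SU2, x2 = u⁻¹ * x1 * u ∧ y2 = u⁻¹ * y1 * u := by
  set t : ℝ := (SU2.trace x1).re with ht
  obtain ⟨u1, hu1⟩ := exists_diag x1
  obtain ⟨u2, hu2'⟩ := exists_diag x2
  have hu2 : u2⁻¹ * x2 * u2 = diagSU t := by rw [hu2', ← hx]
  set lm := lam t with hlm
  have hnsc := nonscalar_of_noncomm hnc1
  have hne : lm - star lm ≠ 0 := sub_ne_zero_of_ne (lam_ne_star hnsc.1 hnsc.2)
  set B1 := u1⁻¹ * y1 * u1 with hB1d
  set B2 := u2⁻¹ * y2 * u2 with hB2d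
  obtain ⟨a1, b1, hB1, hB1u⟩ := exists_pair B1
  obtain ⟨a2, b2, hB2, hB2u⟩ := exists_pair B2
  have hb1 : b1 ≠ 0 := offdiag_ne_zero hu1 hB1 hnc1
  have hb2 : b2 ≠ 0 := offdiag_ne_zero hu2 hB2 hnc2
  -- traces of B1, B2 agree
  have htrB : a1 + star a1 = a2 + star a2 := by
    have e1 : SU2.trace B1 = SU2.trace y1 := trace_conj u1 y1
    have e2 : SU2.trace B2 = SU2.trace y2 := trace_conj u2 y2
    have f1 := trace_eq_pair B1 hB1
    have f2 := trace_eq_pair B2 hB2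
    rw [← f1, ← f2, e1, e2, hy]
  -- traces of diag * B agree
  have htrDB : lm * a1 + star lm * star a1 = lm * a2 + star lm * star a2 := by
    have e1 : SU2.trace (diagSU t * B1) = SU2.trace (x1 * y1) := by
      rw [← hu1, hB1d]
      have : u1⁻¹ * x1 * u1 * (u1⁻¹ * y1 * u1) = u1⁻¹ * (x1 * y1) * u1 := by group
      rw [this, trace_conj]
    have e2 : SU2.trace (diagSU t * B2) = SU2.trace (x2 * y2) := by
      rw [← hu2, hB2d]
      have : u2⁻¹ * x2 * u2 * (u2⁻¹ * y2 * u2) = u2⁻¹ * (x2 * y2) * u2 := by group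
      rw [this, trace_conj]
    have f1 : SU2.trace (diagSU t * B1) = lm * a1 + star (lm * a1) := by
      rw [SU2.trace, toMatrix_mul, toMatrix_diagSU, hB1, mk2_mul, mk2_trace]
      ring_nf
      rw [mul_comm a1 lm]
    have f2 : SU2.trace (diagSU t * B2) = lm * a2 + star (lm * a2) := by
      rw [SU2.trace, toMatrix_mul, toMatrix_diagSU, hB2, mk2_mul, mk2_trace]
      ring_nf
      rw [mul_comm a2 lm]
    have := f1.symm.trans (e1.trans (hxy.trans (e2.symm.trans f2)))
    rw [star_mul', star_mul'] at this
    linear_combination this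
  -- deduce a1 = a2
  have ha : a1 = a2 := by
    have hd : (a1 - a2) + star (a1 - a2) = 0 := by
      rw [star_sub]; linear_combination htrB
    have hld : lm * (a1 - a2) + star lm * star (a1 - a2) = 0 := by
      rw [star_sub]; linear_combination htrDB
    have : (lm - star lm) * (a1 - a2) = 0 := by
      rw [star_sub] at hd hld
      linear_combination hld - star lm * hd
    rcases mul_eq_zero.mp this with hc | hc
    · exact absurd hc hne
    · linear_combination hc
  -- |b1| = |b2|
  have hbb : b1 * star b1 = b2 * star b2 := by
    have := hB1u
    rw [ha] at this
    linear_combination this - hB2u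
  -- square root of the phase
  set w : ℂ := b2 / b1 with hw
  have hwu : w * star w = 1 := by
    rw [hw, star_div₀, div_mul_div_comm, ← hbb,
      div_self (mul_ne_zero hb1 (star_ne_zero.mpr hb1))]
  obtain ⟨mu, hmu⟩ := IsAlgClosed.exists_pow_nat_eq (star w) (n := 2) (by norm_num)
  have hmuu : mu * star mu = 1 := by
    have h1 : (mu * star mu) ^ 2 = 1 := by
      have : (mu * star mu) ^ 2 = mu ^ 2 * star (mu ^ 2) := by rw [mul_pow, ← star_pow]
      rw [this, hmu, star_star]
      linear_combination hwu
    have h2 : (Complex.normSq mu : ℂ) = mu * star mu := by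
      rw [star_mul_self_eq_normSq mu]
    have h3 : (Complex.normSq mu : ℝ) ^ 2 = 1 := by
      have := h1
      rw [← h2] at this
      exact_mod_cast this
    have h4 : Complex.normSq mu = 1 := by
      nlinarith [Complex.normSq_nonneg mu]
    rw [← h2, h4]; norm_num
  set v : SU2 := ofPair mu 0 (by simpa using hmuu) with hv
  -- v fixes diagSU t and conjugates B1 to B2
  have hwb : w * b1 = b2 := by rw [hw]; field_simp
  have hsmu : star mu ^ 2 = w := by rw [← star_pow, hmu, star_star]
  have hvd : v⁻¹ * diagSU t * v = diagSU t := by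
    apply toMatrix_injective
    rw [toMatrix_conj, toMatrix_diagSU]
    show (mk2 mu 0)ᴴ * mk2 lm 0 * mk2 mu 0 = mk2 lm 0
    rw [mk2_conjTranspose, neg_zero, mk2_mul, mk2_mul]
    exact mk2_ext (by (try simp only [star_zero]); linear_combination lm * hmuu) (by (try simp only [star_zero]); ring)
  have hvB : v⁻¹ * B1 * v = B2 := by
    apply toMatrix_injective
    rw [toMatrix_conj, hB1, hB2]
    show (mk2 mu 0)ᴴ * mk2 a1 b1 * mk2 mu 0 = mk2 a2 b2
    rw [mk2_conjTranspose, neg_zero, mk2_mul, mk2_mul]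
    exact mk2_ext (by (try simp only [star_zero]); rw [← ha]; linear_combination a1 * hmuu)
      (by (try simp only [star_zero]); linear_combination b1 * hsmu + hwb)
  -- assemble
  refine ⟨u1 * v * u2⁻¹, ?_, ?_⟩
  · have : u2⁻¹ * x2 * u2 = v⁻¹ * (u1⁻¹ * x1 * u1) * v := by rw [hu1, hu2, hvd]
    calc x2 = u2 * (u2⁻¹ * x2 * u2) * u2⁻¹ := by group
      _ = u2 * (v⁻¹ * (u1⁻¹ * x1 * u1) * v) * u2⁻¹ := by rw [this]
      _ = (u1 * v * u2⁻¹)⁻¹ * x1 * (u1 * v * u2⁻¹) := by group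
  · have : u2⁻¹ * y2 * u2 = v⁻¹ * (u1⁻¹ * y1 * u1) * v := by rw [← hB1d, ← hB2d, hvB]
    calc y2 = u2 * (u2⁻¹ * y2 * u2) * u2⁻¹ := by group
      _ = u2 * (v⁻¹ * (u1⁻¹ * y1 * u1) * v) * u2⁻¹ := by rw [this]
      _ = (u1 * v * u2⁻¹)⁻¹ * y1 * (u1 * v * u2⁻¹) := by group

lemma toMatrix_unconj (u z : SU2) :
    SU2.toMatrix z = SU2.toMatrix u * SU2.toMatrix (u⁻¹ * z * u) * (SU2.toMatrix u)ᴴ := by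
  have hz : z = u * (u⁻¹ * z * u) * u⁻¹ := by group
  conv_lhs => rw [hz]
  rw [toMatrix_mul (u * (u⁻¹ * z * u)) u⁻¹, toMatrix_mul u (u⁻¹ * z * u), toMatrix_inv]

lemma span_lemma {x y : SU2} (hnc : x * y ≠ y * x) (z : SU2) :
    ∃ c0 c1 c2 c3 : ℂ, SU2.toMatrix z =
      c0 • (1 : M2) + c1 • SU2.toMatrix x + c2 • SU2.toMatrix y
        + c3 • (SU2.toMatrix x * SU2.toMatrix y) := by
  set t : ℝ := (SU2.trace x).re with ht
  obtain ⟨u, hu⟩ := exists_diag x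
  set lm := lam t with hlm
  have hnsc := nonscalar_of_noncomm hnc
  have hne : lm - star lm ≠ 0 := sub_ne_zero_of_ne (lam_ne_star hnsc.1 hnsc.2)
  obtain ⟨a, b, hB, hBu⟩ := exists_pair (u⁻¹ * y * u)
  have hb : b ≠ 0 := offdiag_ne_zero hu hB hnc
  have hbs : star b ≠ 0 := star_ne_zero.mpr hb
  obtain ⟨s, r, hZ, hZu⟩ := exists_pair (u⁻¹ * z * u)
  set c3 : ℂ := (r/b - star r/star b)/(lm - star lm) with hc3d
  set c2 : ℂ := r/b - c3 * lm with hc2d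
  set c1 : ℂ := ((s - a*(r/b)) - (star s - star a*(star r/star b)))/(lm - star lm) with hc1d
  set c0 : ℂ := (s - a*(r/b)) - c1 * lm with hc0d
  have hbinv : b * b⁻¹ = 1 := mul_inv_cancel₀ hb
  have hBinv : star b * (star b)⁻¹ = 1 := mul_inv_cancel₀ hbs
  have hc3 : c3 * (lm - star lm) = r/b - star r/star b := by
    rw [hc3d]; exact div_mul_cancel₀ _ hne
  have hc1 : c1 * (lm - star lm) = (s - a*(r/b)) - (star s - star a*(star r/star b)) := by
    rw [hc1d]; exact div_mul_cancel₀ _ hne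
  have h23 : c2 + c3 * lm = r/b := by rw [hc2d]; ring
  have h23' : c2 + c3 * star lm = star r/star b := by linear_combination h23 - hc3
  have h01 : c0 + c1 * lm = s - a*(r/b) := by rw [hc0d]; ring
  have h01' : c0 + c1 * star lm = star s - star a*(star r/star b) := by
    linear_combination h01 - hc1
  have hcombo : mk2 s r = c0 • (1 : M2) + c1 • mk2 lm 0 + c2 • mk2 a b
      + c3 • (mk2 lm 0 * mk2 a b) := by
    rw [mk2_mul]
    ext i j
    fin_cases i <;> fin_cases j <;>
      simp [mk2, Matrix.one_apply, star_mul']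
    · linear_combination -h01 - a * h23
    · linear_combination -b * h23 - r * hbinv
    · simp only [← Complex.star_def]
      linear_combination star b * h23' + star r * hBinv
    · simp only [← Complex.star_def]
      linear_combination -h01' - star a * h23'
  refine ⟨c0, c1, c2, c3, ?_⟩
  have hUU' : ∀ M : M2, (SU2.toMatrix u)ᴴ * (SU2.toMatrix u * M) = M := fun M => by
    rw [← Matrix.mul_assoc, conjT_mul_toMatrix, Matrix.one_mul]
  have hxM : SU2.toMatrix x = SU2.toMatrix u * mk2 lm 0 * (SU2.toMatrix u)ᴴ :=
    toMatrix_x_eq x u hu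
  have hyM : SU2.toMatrix y = SU2.toMatrix u * mk2 a b * (SU2.toMatrix u)ᴴ := by
    rw [toMatrix_unconj u y, hB]
  rw [toMatrix_unconj u z, hZ, hcombo, hxM, hyM]
  simp only [Matrix.mul_add, Matrix.add_mul, Matrix.mul_smul, Matrix.smul_mul, Matrix.mul_assoc,
    one_mul, mul_one, toMatrix_mul_conjT, hUU']

section transferN
variable {n : ℕ} {g h : Fin n → SU2}

lemma transfer2 (htr : ∀ w : FreeGroup (Fin n),
      SU2.trace (FreeGroup.lift g w) = SU2.trace (FreeGroup.lift h w)) (w1 w2 : FreeGroup (Fin n)) (c1 c2 : ℂ)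
    (h0 : c1 • SU2.toMatrix (FreeGroup.lift g w1) + c2 • SU2.toMatrix (FreeGroup.lift g w2) = 0) :
    c1 • SU2.toMatrix (FreeGroup.lift h w1) + c2 • SU2.toMatrix (FreeGroup.lift h w2) = 0 := by
  have := transfer htr ![w1, w2] ![c1, c2] (by simpa [Fin.sum_univ_two] using h0)
  simpa [Fin.sum_univ_two] using this

lemma transfer3 (htr : ∀ w : FreeGroup (Fin n),
      SU2.trace (FreeGroup.lift g w) = SU2.trace (FreeGroup.lift h w)) (w1 w2 w3 : FreeGroup (Fin n)) (c1 c2 c3 : ℂ)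
    (h0 : c1 • SU2.toMatrix (FreeGroup.lift g w1) + c2 • SU2.toMatrix (FreeGroup.lift g w2)
      + c3 • SU2.toMatrix (FreeGroup.lift g w3) = 0) :
    c1 • SU2.toMatrix (FreeGroup.lift h w1) + c2 • SU2.toMatrix (FreeGroup.lift h w2)
      + c3 • SU2.toMatrix (FreeGroup.lift h w3) = 0 := by
  have := transfer htr ![w1, w2, w3] ![c1, c2, c3] (by simpa [Fin.sum_univ_three] using h0)
  simpa [Fin.sum_univ_three] using this

lemma transfer5 (htr : ∀ w : FreeGroup (Fin n),
      SU2.trace (FreeGroup.lift g w) = SU2.trace (FreeGroup.lift h w)) (w1 w2 w3 w4 w5 : FreeGroup (Fin n)) (c1 c2 c3 c4 c5 : ℂ)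
    (h0 : c1 • SU2.toMatrix (FreeGroup.lift g w1) + c2 • SU2.toMatrix (FreeGroup.lift g w2)
      + c3 • SU2.toMatrix (FreeGroup.lift g w3) + c4 • SU2.toMatrix (FreeGroup.lift g w4)
      + c5 • SU2.toMatrix (FreeGroup.lift g w5) = 0) :
    c1 • SU2.toMatrix (FreeGroup.lift h w1) + c2 • SU2.toMatrix (FreeGroup.lift h w2)
      + c3 • SU2.toMatrix (FreeGroup.lift h w3) + c4 • SU2.toMatrix (FreeGroup.lift h w4)
      + c5 • SU2.toMatrix (FreeGroup.lift h w5) = 0 := by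
  have := transfer htr ![w1, w2, w3, w4, w5] ![c1, c2, c3, c4, c5]
    (by simpa [Fin.sum_univ_five] using h0)
  simpa [Fin.sum_univ_five] using this

end transferN

theorem main_aux (n : ℕ) (g h : Fin n → SU2)
    (htr : ∀ w : FreeGroup (Fin n),
      SU2.trace (FreeGroup.lift g w) = SU2.trace (FreeGroup.lift h w)) :
    ∃ u : SU2, ∀ i : Fin n, h i = u⁻¹ * g i * u := by
  classical
  have htr' : ∀ w : FreeGroup (Fin n),
      SU2.trace (FreeGroup.lift h w) = SU2.trace (FreeGroup.lift g w) := fun w => (htr w).symm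
  have htrgen : ∀ i, SU2.trace (g i) = SU2.trace (h i) := by
    intro i
    have := htr (FreeGroup.of i)
    simpa using this
  by_cases hcomm : ∀ i j, g i * g j = g j * g i
  · by_cases hsc : ∃ i0, SU2.trace (g i0) ≠ 2 ∧ SU2.trace (g i0) ≠ -2
    · -- Case A: commuting, with a nonscalar element
      obtain ⟨i0, hi0⟩ := hsc
      obtain ⟨u, hu⟩ := conj_of_trace_eq (g i0) (h i0) (htrgen i0)
      refine ⟨u, fun j => ?_⟩
      obtain ⟨p, q, hpq⟩ := mem_commutant hi0.1 hi0.2 (hcomm j i0)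
      have h0 : (1 : ℂ) • SU2.toMatrix (FreeGroup.lift g (FreeGroup.of j))
          + (-p) • SU2.toMatrix (FreeGroup.lift g 1)
          + (-q) • SU2.toMatrix (FreeGroup.lift g (FreeGroup.of i0)) = 0 := by
        simp only [FreeGroup.lift_apply_of, _root_.map_one, toMatrix_one]
        rw [hpq]
        module
      have h1 := transfer3 htr _ _ _ _ _ _ h0
      simp only [FreeGroup.lift_apply_of, _root_.map_one, toMatrix_one] at h1
      have hmat : SU2.toMatrix (h j) = p • (1 : M2) + q • SU2.toMatrix (h i0) := by
        linear_combination (norm := module) h1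
      apply toMatrix_injective
      rw [hmat, toMatrix_conj, hpq, hu, toMatrix_conj]
      simp only [Matrix.mul_add, Matrix.add_mul, Matrix.mul_smul, Matrix.smul_mul,
        Matrix.mul_assoc, one_mul, mul_one, conjT_mul_toMatrix]
    · -- Case C: all elements are ±1
      push_neg at hsc
      refine ⟨1, fun j => ?_⟩
      rw [inv_one, one_mul, mul_one]
      rcases Classical.em (SU2.trace (g j) = 2) with h2 | h2
      · rw [eq_one_of_trace_two (g j) h2, eq_one_of_trace_two (h j) (by rw [← htrgen j]; exact h2)]
      · have hm2 : SU2.trace (g j) = -2 := hsc j h2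
        rw [eq_negOne_of_trace_neg_two (g j) hm2,
          eq_negOne_of_trace_neg_two (h j) (by rw [← htrgen j]; exact hm2)]
  · -- Case B: noncommuting pair
    push_neg at hcomm
    obtain ⟨i0, j0, hnc⟩ := hcomm
    have hnch : h i0 * h j0 ≠ h j0 * h i0 := by
      intro hcontra
      apply hnc
      have h0 : (1 : ℂ) • SU2.toMatrix (FreeGroup.lift h (FreeGroup.of i0 * FreeGroup.of j0))
          + (-1 : ℂ) • SU2.toMatrix (FreeGroup.lift h (FreeGroup.of j0 * FreeGroup.of i0)) = 0 := by
        simp only [_root_.map_mul, FreeGroup.lift_apply_of, hcontra]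
        module
      have h1 := transfer2 htr' _ _ _ _ h0
      simp only [_root_.map_mul, FreeGroup.lift_apply_of, one_smul, neg_smul, one_smul] at h1
      have : SU2.toMatrix (g i0 * g j0) = SU2.toMatrix (g j0 * g i0) := by
        rw [toMatrix_mul, toMatrix_mul]
        have := h1
        rw [toMatrix_mul, toMatrix_mul] at this
        linear_combination (norm := module) this
      exact toMatrix_injective this
    have htrpair : SU2.trace (g i0 * g j0) = SU2.trace (h i0 * h j0) := by
      have := htr (FreeGroup.of i0 * FreeGroup.of j0)
      simpa using this
    obtain ⟨u, hui, huj⟩ := pair_conj hnc hnch (htrgen i0) (htrgen j0) htrpair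
    refine ⟨u, fun k => ?_⟩
    obtain ⟨c0, c1, c2, c3, hck⟩ := span_lemma hnc (g k)
    have h0 : (1 : ℂ) • SU2.toMatrix (FreeGroup.lift g (FreeGroup.of k))
        + (-c0) • SU2.toMatrix (FreeGroup.lift g 1)
        + (-c1) • SU2.toMatrix (FreeGroup.lift g (FreeGroup.of i0))
        + (-c2) • SU2.toMatrix (FreeGroup.lift g (FreeGroup.of j0))
        + (-c3) • SU2.toMatrix (FreeGroup.lift g (FreeGroup.of i0 * FreeGroup.of j0)) = 0 := by
      simp only [FreeGroup.lift_apply_of, _root_.map_one, _root_.map_mul, toMatrix_one, toMatrix_mul]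
      rw [hck]
      module
    have h1 := transfer5 htr _ _ _ _ _ _ _ _ _ _ h0
    simp only [FreeGroup.lift_apply_of, _root_.map_one, _root_.map_mul, toMatrix_one, toMatrix_mul] at h1
    have hmat : SU2.toMatrix (h k) = c0 • (1 : M2) + c1 • SU2.toMatrix (h i0)
        + c2 • SU2.toMatrix (h j0)
        + c3 • (SU2.toMatrix (h i0) * SU2.toMatrix (h j0)) := by
      linear_combination (norm := module) h1
    apply toMatrix_injective
    have hUU_mid : ∀ M : M2, SU2.toMatrix u * ((SU2.toMatrix u)ᴴ * M) = M := fun M => by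
      rw [← Matrix.mul_assoc, toMatrix_mul_conjT, Matrix.one_mul]
    rw [hmat, toMatrix_conj, hck, hui, huj, toMatrix_conj, toMatrix_conj]
    simp only [Matrix.mul_add, Matrix.add_mul, Matrix.mul_smul, Matrix.smul_mul,
      Matrix.mul_assoc, one_mul, mul_one, conjT_mul_toMatrix, hUU_mid]


end SU2aux

/-- If two `n`-tuples of elements of SU(2) give the same traces for all words in the
free group on `n` generators, then they are simultaneously conjugate. -/
theorem su2_tuples_with_equal_word_traces_are_conjugate (n : ℕ) (g h : Fin n → SU2)
    (htr : ∀ w : FreeGroup (Fin n),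
      SU2.trace (FreeGroup.lift g w) = SU2.trace (FreeGroup.lift h w)) :
    ∃ u : SU2, ∀ i : Fin n, h i = u⁻¹ * g i * u :=
  SU2aux.main_aux n g h htr
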